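/- Let p be an odd prime, k ≥ 2, and q = p^k, and let a ∈ (ℤ/qℤ)^* be such that a is not a quadratic residue modulo q (equivalently, a mod p is a quadratic nonresidue). Then the untwisted Kloosterman sum vanishes: K_q(a,1,1) = 0, where 1 denotes the trivial multiplicative character of (ℤ/qℤ)^*. -/

import Mathlib

open Complex Finset

/-- The standard additive character `e_q(x) = exp(2πix/q)` of `ℤ/qℤ`. -/
noncomputable def eZMod (q : ℕ) (x : ZMod q) : ℂ :=
  Complex.exp (2 * Real.pi * Complex.I * x.val / q)

lemma eZMod_eq_pow (q : ℕ) (x : ZMod q) :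
    eZMod q x = Complex.exp (2 * Real.pi * Complex.I / q) ^ x.val := by
  rw [← Complex.exp_nat_mul, eZMod]
  congr 1
  ring

lemma eZMod_zero (q : ℕ) [NeZero q] : eZMod q 0 = 1 := by
  simp [eZMod]

lemma eZMod_add (q : ℕ) [NeZero q] (x y : ZMod q) :
    eZMod q (x + y) = eZMod q x * eZMod q y := by
  have hprim := Complex.isPrimitiveRoot_exp q (NeZero.ne q)
  rw [eZMod_eq_pow, eZMod_eq_pow, eZMod_eq_pow, ← pow_add, ZMod.val_add]
  conv_rhs => rw [← Nat.mod_add_div (x.val + y.val) q]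
  rw [pow_add, pow_mul, hprim.pow_eq_one, one_pow, mul_one]

lemma eZMod_nat_mul (q : ℕ) [NeZero q] (t : ℕ) (s : ZMod q) :
    eZMod q ((t : ZMod q) * s) = eZMod q s ^ t := by
  induction t with
  | zero => simpa using eZMod_zero q
  | succ n ih =>
      push_cast
      rw [add_mul, one_mul, eZMod_add, ih, pow_succ]

lemma eZMod_eq_one_iff (q : ℕ) [NeZero q] (s : ZMod q) :
    eZMod q s = 1 ↔ s = 0 := by
  have hprim := Complex.isPrimitiveRoot_exp q (NeZero.ne q)
  rw [eZMod_eq_pow, hprim.pow_eq_one_iff_dvd]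
  constructor
  · intro h
    rw [← ZMod.val_eq_zero]
    exact Nat.eq_zero_of_dvd_of_lt h (ZMod.val_lt s)
  · rintro rfl
    simp

lemma odd_order_isSquare {G : Type*} [Group G] {w : G} (h : Odd (orderOf w)) :
    IsSquare w := by
  obtain ⟨n, hn⟩ := h
  refine ⟨w ^ (n + 1), ?_⟩
  rw [← pow_add]
  have : n + 1 + (n + 1) = orderOf w + 1 := by omega
  rw [this, pow_succ, pow_orderOf_eq_one, one_mul]

lemma pk_mul_eq_zero_iff (p k : ℕ) [Fact p.Prime] (hk : 1 ≤ k) (c : ZMod (p ^ k)) :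
    (p : ZMod (p ^ k)) ^ (k - 1) * c = 0 ↔
      ZMod.castHom (dvd_pow_self p (by omega : k ≠ 0)) (ZMod p) c = 0 := by
  haveI : NeZero (p ^ k) := ⟨pow_ne_zero k (Fact.out : p.Prime).pos.ne'⟩
  have hc : c = ((c.val : ℕ) : ZMod (p ^ k)) := (ZMod.natCast_zmod_val c).symm
  rw [ZMod.castHom_apply]
  have h1 : (p : ZMod (p ^ k)) ^ (k - 1) * c = ((p ^ (k - 1) * c.val : ℕ) : ZMod (p ^ k)) := by
    push_cast
    rw [← hc]
  have h2 : (ZMod.cast c : ZMod p) = ((c.val : ℕ) : ZMod p) := by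
    rw [ZMod.cast_eq_val]
  rw [h1, h2, ZMod.natCast_eq_zero_iff, ZMod.natCast_eq_zero_iff]
  constructor
  · intro h
    have hkk : p ^ k = p ^ (k - 1) * p := by
      rw [← pow_succ]
      congr 1
      omega
    have h' : p ^ (k - 1) * p ∣ p ^ (k - 1) * c.val := (dvd_of_eq hkk.symm).trans h
    exact (mul_dvd_mul_iff_left (pow_ne_zero (k-1) (Fact.out : p.Prime).pos.ne')).mp h'
  · intro h
    have hkk : p ^ k = p ^ (k - 1) * p := by
      rw [← pow_succ]; congr 1; omega
    exact (dvd_of_eq hkk).trans (mul_dvd_mul_left _ h)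

lemma isSquare_unit_lift (p k : ℕ) [Fact p.Prime] (hodd : p ≠ 2) (hk : 1 ≤ k)
    (a : (ZMod (p ^ k))ˣ)
    (h : IsSquare (ZMod.unitsMap (dvd_pow_self p (by omega : k ≠ 0)) a)) :
    IsSquare a := by
  haveI : NeZero (p ^ k) := ⟨pow_ne_zero k (Fact.out : p.Prime).pos.ne'⟩
  set f := ZMod.unitsMap (dvd_pow_self p (by omega : k ≠ 0)) with hf
  have hsurj : Function.Surjective f := ZMod.unitsMap_surjective _
  obtain ⟨v, hv⟩ := h
  obtain ⟨g, hg⟩ := hsurj v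
  have hw : a * (g * g)⁻¹ ∈ f.ker := by
    rw [MonoidHom.mem_ker, map_mul, map_inv, map_mul, hg, ← hv, mul_inv_cancel]
  -- kernel has cardinality p^(k-1)
  have hcard : Nat.card f.ker = p ^ (k - 1) := by
    have h1 : Nat.card (ZMod (p ^ k))ˣ = Nat.card ((ZMod (p ^ k))ˣ ⧸ f.ker) * Nat.card f.ker :=
      Subgroup.card_eq_card_quotient_mul_card_subgroup f.ker
    have h2 : Nat.card ((ZMod (p ^ k))ˣ ⧸ f.ker) = Nat.card (ZMod p)ˣ :=
      Nat.card_congr (QuotientGroup.quotientKerEquivOfSurjective f hsurj).toEquiv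
    have h3 : Nat.card (ZMod (p ^ k))ˣ = p ^ (k - 1) * (p - 1) := by
      rw [Nat.card_eq_fintype_card, ZMod.card_units_eq_totient,
        Nat.totient_prime_pow (Fact.out : p.Prime) (by omega)]
    have h4 : Nat.card (ZMod p)ˣ = p - 1 := by
      haveI : NeZero p := ⟨(Fact.out : p.Prime).pos.ne'⟩
      rw [Nat.card_eq_fintype_card, ZMod.card_units_eq_totient,
        Nat.totient_prime (Fact.out : p.Prime)]
    rw [h2, h3, h4] at h1
    have hp1 : 0 < p - 1 := by have := (Fact.out : p.Prime).two_le; omega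
    rw [mul_comm (p - 1)] at h1
    exact (Nat.eq_of_mul_eq_mul_right hp1 h1.symm)
  have hdvd : orderOf (a * (g * g)⁻¹) ∣ p ^ (k - 1) := hcard ▸ f.ker.orderOf_dvd_natCard hw
  have hoddord : Odd (orderOf (a * (g * g)⁻¹)) :=
    Odd.of_dvd_nat (Odd.pow ((Fact.out : p.Prime).odd_of_ne_two hodd)) hdvd
  have hsq : IsSquare (a * (g * g)⁻¹) := odd_order_isSquare hoddord
  have : a = (a * (g * g)⁻¹) * (g * g) := by group
  rw [this]
  exact hsq.mul ⟨g, rfl⟩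

/-- The twisted Kloosterman sum `K_q(a,b,χ) = ∑_{x ∈ (ℤ/qℤ)^*} e_q(ax + bx⁻¹)χ(x)`. -/
noncomputable def Kloos (q : ℕ) [NeZero q] (a b : ZMod q) (χ : MulChar (ZMod q) ℂ) : ℂ :=
  ∑ x : (ZMod q)ˣ,
    eZMod q (a * (x : ZMod q) + b * ((x⁻¹ : (ZMod q)ˣ) : ZMod q)) * χ (x : ZMod q)

/-- **Vanishing of untwisted Kloosterman sums at nonresidues.** For `q = p^k` with `p`
an odd prime and `k ≥ 2`, if the unit `a` of `ℤ/qℤ` is not a quadratic residue mod `q`,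
then `K_q(a,1,1) = 0`. -/
theorem kloos_eq_zero_of_not_isSquare
    (p k : ℕ) [Fact p.Prime] (hodd : p ≠ 2) (hk : 2 ≤ k)
    (a : (ZMod (p ^ k))ˣ) (ha : ¬ IsSquare ((a : ZMod (p ^ k)))) :
    Kloos (p ^ k) (a : ZMod (p ^ k)) (1 : ZMod (p ^ k)) (1 : MulChar (ZMod (p ^ k)) ℂ) = 0 := by
  haveI : NeZero (p ^ k) := ⟨pow_ne_zero k (Fact.out : p.Prime).pos.ne'⟩
  set m : ZMod (p ^ k) := (p : ZMod (p ^ k)) ^ (k - 1) with hm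
  have hm2 : m * m = 0 := by
    have h1 : m * m = ((p ^ (k - 1) * p ^ (k - 1) : ℕ) : ZMod (p ^ k)) := by
      rw [hm]; push_cast; ring
    rw [h1, ZMod.natCast_eq_zero_iff, ← pow_add]
    exact pow_dvd_pow p (by omega)
  have hpm : (p : ZMod (p ^ k)) * m = 0 := by
    have h1 : (p : ZMod (p ^ k)) * m = ((p ^ k : ℕ) : ZMod (p ^ k)) := by
      rw [hm]; push_cast; rw [← pow_succ']; congr 1; omega
    rw [h1, ZMod.natCast_self]
  set F : (ZMod (p ^ k))ˣ → ℂ := fun x =>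
    eZMod (p ^ k) ((a : ZMod (p ^ k)) * (x : ZMod (p ^ k))
      + ((x⁻¹ : (ZMod (p ^ k))ˣ) : ZMod (p ^ k))) with hF
  set C : (ZMod (p ^ k))ˣ → ZMod (p ^ k) := fun x =>
    (a : ZMod (p ^ k)) * (x : ZMod (p ^ k)) - ((x⁻¹ : (ZMod (p ^ k))ˣ) : ZMod (p ^ k)) with hC
  have hK : Kloos (p ^ k) (a : ZMod (p ^ k)) 1 1 = ∑ x : (ZMod (p ^ k))ˣ, F x := by
    unfold Kloos
    refine Finset.sum_congr rfl fun x _ => ?_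
    rw [MulChar.one_apply_coe, mul_one, one_mul]
  -- Step A: m * C x ≠ 0 for all x
  have hCne : ∀ x : (ZMod (p ^ k))ˣ, m * C x ≠ 0 := by
    intro x hx
    apply ha
    rw [pk_mul_eq_zero_iff p k (by omega)] at hx
    set φ := ZMod.castHom (dvd_pow_self p (by omega : k ≠ 0)) (ZMod p) with hφ
    have h1 : φ ((a : ZMod (p ^ k)) * (x : ZMod (p ^ k)))
        - φ (((x⁻¹ : (ZMod (p ^ k))ˣ) : ZMod (p ^ k))) = 0 := by
      rw [← map_sub]; exact hx
    have h1' := sub_eq_zero.mp h1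
    have hXY : φ (x : ZMod (p ^ k)) * φ ((x⁻¹ : (ZMod (p ^ k))ˣ) : ZMod (p ^ k)) = 1 := by
      rw [← map_mul, ← Units.val_mul, mul_inv_cancel, Units.val_one, map_one]
    have hA : φ (a : ZMod (p ^ k)) =
        φ ((x⁻¹ : (ZMod (p ^ k))ˣ) : ZMod (p ^ k))
          * φ ((x⁻¹ : (ZMod (p ^ k))ˣ) : ZMod (p ^ k)) := by
      calc φ (a : ZMod (p ^ k))
          = φ (a : ZMod (p ^ k)) * (φ (x : ZMod (p ^ k))
              * φ ((x⁻¹ : (ZMod (p ^ k))ˣ) : ZMod (p ^ k))) := by rw [hXY, mul_one]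
        _ = (φ ((a : ZMod (p ^ k)) * (x : ZMod (p ^ k))))
              * φ ((x⁻¹ : (ZMod (p ^ k))ˣ) : ZMod (p ^ k)) := by rw [map_mul]; ring
        _ = _ := by rw [h1']
    have hU : ZMod.unitsMap (dvd_pow_self p (by omega : k ≠ 0)) a =
        ZMod.unitsMap (dvd_pow_self p (by omega : k ≠ 0)) x⁻¹ *
        ZMod.unitsMap (dvd_pow_self p (by omega : k ≠ 0)) x⁻¹ := by
      apply Units.ext
      rw [Units.val_mul]
      simpa [ZMod.unitsMap_def, hφ] using hA
    obtain ⟨r, hr⟩ := isSquare_unit_lift p k hodd (by omega) a ⟨_, hU⟩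
    exact ⟨(r : ZMod (p ^ k)), by rw [hr, Units.val_mul]⟩
  -- Step B: averaging identity
  have key : ∀ t : ℕ, (∑ x : (ZMod (p ^ k))ˣ, F x)
      = ∑ x : (ZMod (p ^ k))ˣ, F x * (eZMod (p ^ k) (m * C x)) ^ t := by
    intro t
    have hu : ((1 : ZMod (p ^ k)) + t * m) * (1 - t * m) = 1 := by
      have h1 : ((1 : ZMod (p ^ k)) + t * m) * (1 - t * m) = 1 - (t * t) * (m * m) := by ring
      rw [h1, hm2]; ring
    set u : (ZMod (p ^ k))ˣ := ⟨1 + t * m, 1 - t * m, hu, by rw [mul_comm]; exact hu⟩ with hudef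
    have harg : ∀ x : (ZMod (p ^ k))ˣ,
        (a : ZMod (p ^ k)) * ((x * u : (ZMod (p ^ k))ˣ) : ZMod (p ^ k))
            + (((x * u)⁻¹ : (ZMod (p ^ k))ˣ) : ZMod (p ^ k))
          = ((a : ZMod (p ^ k)) * (x : ZMod (p ^ k)) + ((x⁻¹ : (ZMod (p ^ k))ˣ) : ZMod (p ^ k)))
            + (t : ZMod (p ^ k)) * (m * C x) := by
      intro x
      rw [mul_inv_rev, Units.val_mul, Units.val_mul]
      have hcu : ((u : (ZMod (p ^ k))ˣ) : ZMod (p ^ k)) = 1 + t * m := rfl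
      have hcu' : ((u⁻¹ : (ZMod (p ^ k))ˣ) : ZMod (p ^ k)) = 1 - t * m := rfl
      rw [hcu, hcu', hC]
      ring
    refine (Fintype.sum_equiv (Equiv.mulRight u)
      (fun x => F x * (eZMod (p ^ k) (m * C x)) ^ t) F (fun x => ?_)).symm
    show F x * (eZMod (p ^ k) (m * C x)) ^ t = F (x * u)
    rw [hF]
    simp only []
    rw [harg x,
      eZMod_add (p ^ k)
        ((a : ZMod (p ^ k)) * (x : ZMod (p ^ k)) + ((x⁻¹ : (ZMod (p ^ k))ˣ) : ZMod (p ^ k)))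
        ((t : ZMod (p ^ k)) * (m * C x)),
      eZMod_nat_mul]
  -- Step C: geometric sums vanish
  have hgeom : ∀ x : (ZMod (p ^ k))ˣ,
      (∑ t ∈ Finset.range p, (eZMod (p ^ k) (m * C x)) ^ t) = 0 := by
    intro x
    have hzne : eZMod (p ^ k) (m * C x) ≠ 1 := by
      rw [Ne, eZMod_eq_one_iff]
      exact hCne x
    have hzp : eZMod (p ^ k) (m * C x) ^ p = 1 := by
      rw [← eZMod_nat_mul, ← mul_assoc, hpm, zero_mul, eZMod_zero]
    rw [geom_sum_eq hzne, hzp, sub_self, zero_div]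
  have hfinal : (p : ℂ) * (∑ x : (ZMod (p ^ k))ˣ, F x) = 0 := by
    have h1 : (∑ t ∈ Finset.range p, ∑ x : (ZMod (p ^ k))ˣ, F x * (eZMod (p ^ k) (m * C x)) ^ t)
        = (p : ℂ) * ∑ x : (ZMod (p ^ k))ˣ, F x := by
      rw [Finset.sum_congr rfl (fun t _ => (key t).symm), Finset.sum_const,
        Finset.card_range, nsmul_eq_mul]
    rw [← h1, Finset.sum_comm]
    refine Finset.sum_eq_zero fun x _ => ?_
    rw [← Finset.mul_sum, hgeom x, mul_zero]
  rw [hK]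
  have hp0 : (p : ℂ) ≠ 0 := by
    exact_mod_cast (Fact.out : p.Prime).pos.ne'
  exact (mul_eq_zero.mp hfinal).resolve_left hp0
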